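/- For f(r) = (1 - 2m r^{1-n} + κ r²)^{1/2}, with u-derivatives defined by d/du = f d/dρ, ρ = r²/2, and Φ = (n+1)m r^{-n-3}, the static equation f_{uu} + (n-1)Φ f = 0 holds. -/

import Mathlib

open Real Filter Topology


/-- for `f(r) = (1 - 2 m r^{1-n} + κ r²)^{1/2}`, viewed as a function of
`ρ = r²/2` via `r = √(2ρ)`, with `u`-derivatives `g_u = f g_ρ` (so `f_{uu} = f (f f_ρ)_ρ`)
and `Φ = (n+1) m r^{-n-3}`, the static equation `f_{uu} + (n-1) Φ f = 0` holds. -/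
theorem stmt4 (n : ℕ) (hn : 2 ≤ n) (m κ : ℝ) (r : ℝ) (hr : 0 < r)
    (hpos : 0 < 1 - 2 * m * r ^ ((1 : ℝ) - n) + κ * r ^ (2 : ℕ))
    (F : ℝ → ℝ)
    (hF : F = fun p : ℝ =>
      Real.sqrt (1 - 2 * m * (Real.sqrt (2 * p)) ^ ((1 : ℝ) - n) + κ * (2 * p))) :
    F (r ^ (2 : ℕ) / 2) * deriv (fun p => F p * deriv F p) (r ^ (2 : ℕ) / 2)
      + ((n : ℝ) - 1) * (((n : ℝ) + 1) * m * r ^ (-(n : ℝ) - 3)) * F (r ^ (2 : ℕ) / 2)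
        = 0 := by
  set e : ℝ := (1 - (n:ℝ))/2 with he
  set G : ℝ → ℝ := fun p => 1 - 2*m*(2*p)^e + κ*(2*p) with hG
  set G' : ℝ → ℝ := fun p => -(4*m*e)*(2*p)^(e-1) + 2*κ with hG'
  set p₀ : ℝ := r^(2:ℕ)/2 with hp₀
  have p₀pos : 0 < p₀ := by rw [hp₀]; positivity
  have h2p₀ : 2*p₀ = r^(2:ℕ) := by rw [hp₀]; ring
  have h2p : ∀ p : ℝ, HasDerivAt (fun p : ℝ => 2*p) 2 p := fun p => by
    simpa using (hasDerivAt_id p).const_mul 2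
  have hGderiv : ∀ p : ℝ, 0 < p → HasDerivAt G (G' p) p := by
    intro p hp
    have h2 : (0:ℝ) < 2*p := by linarith
    have h1 : HasDerivAt (fun p : ℝ => (2*p)^e) (e*(2*p)^(e-1)*2) p := by
      have := (Real.hasDerivAt_rpow_const (p := e) (Or.inl h2.ne')).comp p (h2p p)
      exact this
    have h3 := ((h1.const_mul (2*m)).const_sub 1).add ((h2p p).const_mul κ)
    refine h3.congr_deriv ?_
    simp [hG']; ring
  have hG'deriv : ∀ p : ℝ, 0 < p → HasDerivAt G' (-(8*m*e*(e-1))*(2*p)^(e-2)) p := by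
    intro p hp
    have h2 : (0:ℝ) < 2*p := by linarith
    have h1 : HasDerivAt (fun p : ℝ => (2*p)^(e-1)) ((e-1)*(2*p)^(e-1-1)*2) p := by
      have := (Real.hasDerivAt_rpow_const (p := e-1) (Or.inl h2.ne')).comp p (h2p p)
      exact this
    have h3 := (h1.const_mul (-(4*m*e))).add_const (2*κ)
    refine h3.congr_deriv ?_
    have : e - 1 - 1 = e - 2 := by ring
    rw [this]; ring
  have hFG : ∀ p : ℝ, 0 < p → F p = Real.sqrt (G p) := by
    intro p hp
    have h2 : (0:ℝ) < 2*p := by linarith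
    have hsq : (Real.sqrt (2*p)) ^ ((1:ℝ) - n) = (2*p)^e := by
      rw [Real.sqrt_eq_rpow, ← Real.rpow_mul h2.le]
      congr 1
      rw [he]; ring
    rw [hF]; simp only [hsq, hG]
  have hGp₀ : 0 < G p₀ := by
    have hx : (2*p₀)^e = r ^ ((1:ℝ) - n) := by
      rw [h2p₀, ← Real.rpow_natCast r 2, ← Real.rpow_mul hr.le]
      congr 1
      push_cast [he]; ring
    show 0 < 1 - 2*m*(2*p₀)^e + κ*(2*p₀)
    rw [hx, h2p₀]; exact hpos
  have hev : ∀ᶠ p in 𝓝 p₀, 0 < p ∧ 0 < G p := by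
    have h1 : ∀ᶠ p in 𝓝 p₀, 0 < p := eventually_gt_nhds p₀pos
    have h2 : ∀ᶠ p in 𝓝 p₀, 0 < G p :=
      (hGderiv p₀ p₀pos).continuousAt.eventually (eventually_gt_nhds hGp₀)
    exact h1.and h2
  have hkey : (fun p => F p * deriv F p) =ᶠ[𝓝 p₀] fun p => G' p / 2 := by
    filter_upwards [hev, hev.eventually_nhds] with p hp hnp
    have hFp : F =ᶠ[𝓝 p] fun q => Real.sqrt (G q) :=
      hnp.mono fun q hq => hFG q hq.1
    have hd : HasDerivAt (fun q => Real.sqrt (G q)) (1/(2*Real.sqrt (G p)) * G' p) p :=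
      (Real.hasDerivAt_sqrt hp.2.ne').comp p (hGderiv p hp.1)
    have hd2 : HasDerivAt F (1/(2*Real.sqrt (G p)) * G' p) p :=
      hd.congr_of_eventuallyEq hFp
    rw [hd2.deriv, hFG p hp.1]
    have hs : Real.sqrt (G p) ≠ 0 := Real.sqrt_ne_zero'.mpr hp.2
    field_simp
  have hstep : deriv (fun p => F p * deriv F p) p₀ = -(8*m*e*(e-1))*(2*p₀)^(e-2) / 2 := by
    rw [hkey.deriv_eq]
    exact ((hG'deriv p₀ p₀pos).div_const 2).deriv
  rw [hstep]
  have hx : (2*p₀)^(e-2) = r ^ (-(n:ℝ) - 3) := by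
    rw [h2p₀, ← Real.rpow_natCast r 2, ← Real.rpow_mul hr.le]
    congr 1
    push_cast [he]; ring
  rw [hx, he]
  ring
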